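/- For all real numbers λ, μ ≥ 0 with λμ ≤ 1, setting u₁ := 1/√((1+λ²)(1+μ²)) and u₂ := λμ·u₁, one has u₁²·(λ + μ + λ³μ + λμ³ + λ²μ²) ≤ (√2 + 3/2)·√(1 − u₁² − u₂²). -/
import Mathlib


/-- For λ, μ ≥ 0 with λμ ≤ 1, setting u₁ = 1/√((1+λ²)(1+μ²)), u₂ = λμ·u₁,
one has u₁²(λ + μ + λ³μ + λμ³ + λ²μ²) ≤ (√2 + 3/2)√(1 − u₁² − u₂²). -/
theorem stmt_4 (l m : ℝ) (hl : 0 ≤ l) (hm : 0 ≤ m) (hlm : l * m ≤ 1)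
    (u₁ u₂ : ℝ)
    (hu₁ : u₁ = 1 / Real.sqrt ((1 + l ^ 2) * (1 + m ^ 2)))
    (hu₂ : u₂ = l * m * u₁) :
    u₁ ^ 2 * (l + m + l ^ 3 * m + l * m ^ 3 + l ^ 2 * m ^ 2)
      ≤ (Real.sqrt 2 + 3 / 2) * Real.sqrt (1 - u₁ ^ 2 - u₂ ^ 2) := by
  set D : ℝ := (1 + l ^ 2) * (1 + m ^ 2) with hD
  set s : ℝ := l ^ 2 + m ^ 2 with hs
  have hs0 : 0 ≤ s := by positivity
  have hD1 : (1:ℝ) ≤ D := by nlinarith [sq_nonneg l, sq_nonneg m, sq_nonneg (l*m)]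
  have hD0 : (0:ℝ) < D := by linarith
  have hsqD : Real.sqrt D * Real.sqrt D = D := Real.mul_self_sqrt hD0.le
  have hsqDpos : 0 < Real.sqrt D := Real.sqrt_pos.mpr hD0
  have hsqs : Real.sqrt s * Real.sqrt s = s := Real.mul_self_sqrt hs0
  have hsD : Real.sqrt s ≤ Real.sqrt D := by
    apply Real.sqrt_le_sqrt
    nlinarith [sq_nonneg (l*m)]
  -- u₁² = 1/D
  have hu1sq : u₁ ^ 2 = 1 / D := by
    rw [hu₁, div_pow, one_pow, Real.sq_sqrt hD0.le]
  have hu2sq : u₂ ^ 2 = (l*m)^2 / D := by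
    rw [hu₂, mul_pow, hu1sq]; ring
  have hrest : 1 - u₁ ^ 2 - u₂ ^ 2 = s / D := by
    rw [hu1sq, hu2sq]
    field_simp
    ring
  have h2 : (0:ℝ) ≤ Real.sqrt 2 := Real.sqrt_nonneg 2
  -- part 1 : l + m ≤ √2 √s
  have h1 : l + m ≤ Real.sqrt 2 * Real.sqrt s := by
    rw [← Real.sqrt_mul (by norm_num : (0:ℝ) ≤ 2)]
    have : l + m = Real.sqrt ((l + m) ^ 2) := (Real.sqrt_sq (by linarith)).symm
    rw [this]
    apply Real.sqrt_le_sqrt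
    nlinarith [sq_nonneg (l - m)]
  -- part 2 : l m s ≤ √s √D
  have hB : l * m * s ≤ Real.sqrt s * Real.sqrt D := by
    have h1' : l * m * s ≤ s := by nlinarith
    have h2' : s ≤ Real.sqrt s * Real.sqrt D := by
      calc s = Real.sqrt s * Real.sqrt s := hsqs.symm
      _ ≤ Real.sqrt s * Real.sqrt D := by
        apply mul_le_mul_of_nonneg_left hsD (Real.sqrt_nonneg s)
    linarith
  -- part 3 : (lm)² ≤ (1/2) l m s
  have hC : (l * m) ^ 2 ≤ (1/2) * (l * m * s) := by
    nlinarith [sq_nonneg (l - m), mul_nonneg hl hm]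
  have key : l + m + l ^ 3 * m + l * m ^ 3 + l ^ 2 * m ^ 2
      ≤ (Real.sqrt 2 + 3/2) * (Real.sqrt s * Real.sqrt D) := by
    have hmul1 : Real.sqrt 2 * Real.sqrt s ≤ Real.sqrt 2 * (Real.sqrt s * Real.sqrt D) := by
      have := mul_le_mul_of_nonneg_left
        (mul_le_mul_of_nonneg_left hD1 (Real.sqrt_nonneg s)) h2
      calc Real.sqrt 2 * Real.sqrt s = Real.sqrt 2 * (Real.sqrt s * 1) := by ring
      _ ≤ Real.sqrt 2 * (Real.sqrt s * Real.sqrt D) := by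
        apply mul_le_mul_of_nonneg_left _ h2
        apply mul_le_mul_of_nonneg_left _ (Real.sqrt_nonneg s)
        exact Real.one_le_sqrt.mpr hD1
    have hexp : l + m + l ^ 3 * m + l * m ^ 3 + l ^ 2 * m ^ 2
        = (l + m) + l * m * s + (l * m) ^ 2 := by rw [hs]; ring
    rw [hexp]
    linarith [h1, hB, hC, hmul1]
  -- conclude
  rw [hrest, hu1sq, Real.sqrt_div hs0]
  have heq : (Real.sqrt 2 + 3/2) * (Real.sqrt s / Real.sqrt D)
      = (Real.sqrt 2 + 3/2) * (Real.sqrt s * Real.sqrt D) / D := by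
    have h : Real.sqrt s / Real.sqrt D = Real.sqrt s * Real.sqrt D / D := by
      rw [div_eq_div_iff hsqDpos.ne' hD0.ne', mul_assoc, hsqD]
    rw [h]; ring
  rw [heq]
  calc 1 / D * (l + m + l ^ 3 * m + l * m ^ 3 + l ^ 2 * m ^ 2)
      = (l + m + l ^ 3 * m + l * m ^ 3 + l ^ 2 * m ^ 2) / D := by ring
  _ ≤ (Real.sqrt 2 + 3/2) * (Real.sqrt s * Real.sqrt D) / D := by gcongr
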